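/- For every ε ∈ (0,1], one has 0 < tan(ε) − (ε + ε³/3) ≤ (tan(1) − 4/3)·ε³, with strict inequality on the right for ε ∈ (0,1). -/

import Mathlib

open Real Set

-- cos positive on [-1,1]
lemma cos_pos_of_le_one' {x : ℝ} (h0 : -1 ≤ x) (h1 : x ≤ 1) : 0 < Real.cos x := by
  have := Real.pi_gt_three
  exact Real.cos_pos_of_mem_Ioo ⟨by linarith, by linarith⟩

lemma tan_pos' {x : ℝ} (h0 : 0 < x) (h1 : x ≤ 1) : 0 < Real.tan x := by
  have := Real.pi_gt_three
  have := Real.lt_tan h0 (by linarith)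
  linarith

-- q(x) = tan x - (x + x^3/3)
noncomputable def q (x : ℝ) : ℝ := Real.tan x - (x + x ^ 3 / 3)

lemma hq_deriv {x : ℝ} (h0 : -1 ≤ x) (h1 : x ≤ 1) :
    HasDerivAt q (1 / Real.cos x ^ 2 - (1 + x ^ 2)) x := by
  have hc : Real.cos x ≠ 0 := (cos_pos_of_le_one' h0 h1).ne'
  have h := (Real.hasDerivAt_tan hc).sub
    ((hasDerivAt_id x).add ((hasDerivAt_pow 3 x).div_const 3))
  refine h.congr_deriv ?_
  push_cast
  ring

lemma q_pos {x : ℝ} (h0 : 0 < x) (h1 : x ≤ 1) : 0 < q x := by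
  have hmono : StrictMonoOn q (Icc 0 1) := by
    apply strictMonoOn_of_deriv_pos (convex_Icc 0 1)
    · intro y hy
      exact ((hq_deriv (by linarith [hy.1]) hy.2).continuousAt).continuousWithinAt
    · intro y hy
      rw [interior_Icc] at hy
      rw [(hq_deriv (by linarith [hy.1]) hy.2.le).deriv]
      have ht : y < Real.tan y := by
        have := Real.pi_gt_three
        exact Real.lt_tan hy.1 (by linarith [hy.2])
      have hc : Real.cos y ≠ 0 := (cos_pos_of_le_one' (by linarith [hy.1]) hy.2.le).ne'
      have hts : Real.tan y ^ 2 + 1 = 1 / Real.cos y ^ 2 := by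
        have hsc := Real.sin_sq_add_cos_sq y
        rw [Real.tan_eq_sin_div_cos]; field_simp; try linarith
      nlinarith [hy.1]
  have h := hmono (by constructor <;> norm_num) ⟨h0.le, h1⟩ h0
  simpa [q, Real.tan_zero] using h

-- p(x) = x tan^2 x - 3 tan x + 3x
noncomputable def p (x : ℝ) : ℝ := x * Real.tan x ^ 2 - 3 * Real.tan x + 3 * x

lemma hp_deriv {x : ℝ} (h0 : -1 ≤ x) (h1 : x ≤ 1) :
    HasDerivAt p
      (2 * Real.tan x * (1 / Real.cos x ^ 2) * (x - Real.sin x * Real.cos x)) x := by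
  have hcpos := cos_pos_of_le_one' h0 h1
  have hc : Real.cos x ≠ 0 := hcpos.ne'
  have hT := Real.hasDerivAt_tan hc
  have h := (((hasDerivAt_id x).mul (hT.pow 2)).sub (hT.const_mul 3)).add
    ((hasDerivAt_id x).const_mul 3)
  refine h.congr_deriv ?_
  simp only [Pi.pow_apply, id]
  rw [Real.tan_eq_sin_div_cos]
  have hsc := Real.sin_sq_add_cos_sq x
  norm_num
  field_simp
  linear_combination (3 * Real.cos x) * hsc

lemma p_pos {x : ℝ} (h0 : 0 < x) (h1 : x ≤ 1) : 0 < p x := by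
  have hmono : StrictMonoOn p (Icc 0 1) := by
    apply strictMonoOn_of_deriv_pos (convex_Icc 0 1)
    · intro y hy
      exact ((hp_deriv (by linarith [hy.1]) hy.2).continuousAt).continuousWithinAt
    · intro y hy
      rw [interior_Icc] at hy
      rw [(hp_deriv (by linarith [hy.1]) hy.2.le).deriv]
      have hcpos := cos_pos_of_le_one' (by linarith [hy.1]) hy.2.le
      have htp := tan_pos' hy.1 hy.2.le
      have hs : Real.sin y < y := Real.sin_lt hy.1
      have hs0 : 0 < Real.sin y := Real.sin_pos_of_pos_of_lt_pi hy.1 (by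
        have := Real.pi_gt_three; linarith [hy.2])
      have hc1 : Real.cos y ≤ 1 := Real.cos_le_one y
      have hd : 0 < y - Real.sin y * Real.cos y := by nlinarith
      have h2 : 0 < 1 / Real.cos y ^ 2 := by positivity
      nlinarith [mul_pos (mul_pos htp h2) hd]
  have h := hmono (by constructor <;> norm_num) ⟨h0.le, h1⟩ h0
  simpa [p, Real.tan_zero] using h

noncomputable def g (x : ℝ) : ℝ := q x / x ^ 3

lemma g_mono : StrictMonoOn g (Ioc 0 1) := by
  apply strictMonoOn_of_deriv_pos (convex_Ioc 0 1)
  · intro y hy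
    have hy3 : (y:ℝ) ^ 3 ≠ 0 := pow_ne_zero _ (ne_of_gt hy.1)
    exact (((hq_deriv (by linarith [hy.1]) hy.2).continuousAt).div
      ((continuous_pow 3).continuousAt) hy3).continuousWithinAt
  · intro y hy
    rw [interior_Ioc] at hy
    have hy3 : (y:ℝ) ^ 3 ≠ 0 := pow_ne_zero _ (ne_of_gt hy.1)
    have hD : HasDerivAt g
        (((1 / Real.cos y ^ 2 - (1 + y ^ 2)) * y ^ 3 - q y * (↑3 * y ^ 2)) / (y ^ 3) ^ 2) y :=
      (hq_deriv (by linarith [hy.1]) hy.2.le).div (hasDerivAt_pow 3 y) hy3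
    rw [hD.deriv]
    apply div_pos
    · have hc : Real.cos y ≠ 0 := (cos_pos_of_le_one' (by linarith [hy.1]) hy.2.le).ne'
      have hts : Real.tan y ^ 2 + 1 = 1 / Real.cos y ^ 2 := by
        have hsc := Real.sin_sq_add_cos_sq y
        rw [Real.tan_eq_sin_div_cos]; field_simp; try linarith
      have hkey : ((1 / Real.cos y ^ 2 - (1 + y ^ 2)) * y ^ 3 - q y * (↑3 * y ^ 2))
          = y ^ 2 * p y := by
        rw [← hts]; simp only [q, p]; push_cast; ring
      rw [hkey]
      exact mul_pos (pow_pos hy.1 2) (p_pos hy.1 hy.2.le)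
    · exact pow_pos (pow_pos hy.1 3) 2

theorem stmt_13 (ε : ℝ) (hε : ε ∈ Set.Ioc (0:ℝ) 1) :
    0 < Real.tan ε - (ε + ε ^ 3 / 3) ∧
    Real.tan ε - (ε + ε ^ 3 / 3) ≤ (Real.tan 1 - 4 / 3) * ε ^ 3 ∧
    (ε < 1 → Real.tan ε - (ε + ε ^ 3 / 3) < (Real.tan 1 - 4 / 3) * ε ^ 3) := by
  obtain ⟨h0, h1⟩ := hε
  have hqpos := q_pos h0 h1
  have he3 : (0:ℝ) < ε ^ 3 := by positivity
  have hstrict : ε < 1 → Real.tan ε - (ε + ε ^ 3 / 3) < (Real.tan 1 - 4 / 3) * ε ^ 3 := by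
    intro hlt
    have := g_mono ⟨h0, h1⟩ (by constructor <;> norm_num) hlt
    have hg1 : g 1 = Real.tan 1 - 4 / 3 := by simp [g, q]; ring
    rw [hg1] at this
    have := (div_lt_iff₀ he3).mp this
    simpa [q] using this
  refine ⟨hqpos, ?_, hstrict⟩
  rcases lt_or_eq_of_le h1 with h | h
  · exact (hstrict h).le
  · subst h; norm_num
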